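/- If f : V₂ → V₂ is a mod-characterization of a set V of interpretations over A, then the ADF D_f satisfies mod(D_f) = V. -/

import Mathlib

open Classical

/-- Three-valued interpretations over `A`:
`none` is **u**, `some true` is **t**, `some false` is **f**. -/
abbrev Interp (A : Type*) := A → Option Bool

/-- Two-valued interpretations over `A`. -/
abbrev Interp2 (A : Type*) := A → Bool

variable {A : Type*}

/-- The information order `≤ᵢ`, lifted pointwise to interpretations. -/
def leI (v w : Interp A) : Prop := ∀ a, v a = none ∨ v a = w a

/-- The strict information order `<ᵢ`. -/
def ltI (v w : Interp A) : Prop := leI v w ∧ v ≠ w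

/-- `w ∈ [v]₂`: the two-valued interpretation `w` extends `v`. -/
def ext2 (v : Interp A) (w : Interp2 A) : Prop := ∀ a, v a = none ∨ v a = some (w a)

/-- View a two-valued interpretation as a three-valued one. -/
def toI (w : Interp2 A) : Interp A := fun a => some (w a)

/-- `v` is two-valued. -/
def twoValued (v : Interp A) : Prop := ∀ a, v a ≠ none

/-- The operator `Γ_D` of the ADF with acceptance conditions `C`:
it maps `a` to the consensus `⊓ᵢ { C_a(w) | w ∈ [v]₂ }`. -/
noncomputable def Gamma (C : A → Interp2 A → Bool) (v : Interp A) : Interp A :=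
  fun a =>
    if ∀ w, ext2 v w → C a w = true then some true
    else if ∀ w, ext2 v w → C a w = false then some false
    else none

/-- `v` is admissible for the ADF `C`: `v ≤ᵢ Γ(v)`. -/
def admissible (C : A → Interp2 A → Bool) (v : Interp A) : Prop := leI v (Gamma C v)

/-- `v` is complete for the ADF `C`: `Γ(v) = v`. -/
def complete (C : A → Interp2 A → Bool) (v : Interp A) : Prop := Gamma C v = v

/-- `v` is preferred for the ADF `C`: `≤ᵢ`-maximal admissible. -/
def preferred (C : A → Interp2 A → Bool) (v : Interp A) : Prop :=
  admissible C v ∧ ¬ ∃ w, admissible C w ∧ ltI v w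

/-- `v` is a two-valued model of the ADF `C`. -/
def isModel (C : A → Interp2 A → Bool) (v : Interp A) : Prop :=
  twoValued v ∧ Gamma C v = v

/-- The `≤ᵢ`-maximal elements of a set of interpretations. -/
def maximals (W : Set (Interp A)) : Set (Interp A) :=
  {v ∈ W | ¬ ∃ w ∈ W, ltI v w}

/- SETAFs. A SETAF over `A` is a set `X` of pairs `(B, a)` of a (nonempty) set of
attackers `B ⊆ A` and an attacked statement `a ∈ A`. -/

/-- `a` is acceptable wrt `v` in the SETAF `X`. -/
def acceptable (X : Set (Set A × A)) (v : Interp A) (a : A) : Prop :=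
  ∀ B, (B, a) ∈ X → ∃ b ∈ B, v b = some false

/-- `a` is unacceptable wrt `v` in the SETAF `X`. -/
def unacceptable (X : Set (Set A × A)) (v : Interp A) (a : A) : Prop :=
  ∃ B, (B, a) ∈ X ∧ ∀ b ∈ B, v b = some true

/-- `v` is admissible for the SETAF `X`. -/
def admS (X : Set (Set A × A)) (v : Interp A) : Prop :=
  ∀ a, (v a = some true → acceptable X v a) ∧ (v a = some false → unacceptable X v a)

/-- `v` is complete for the SETAF `X`. -/
def comS (X : Set (Set A × A)) (v : Interp A) : Prop :=
  ∀ a, (v a = some true ↔ acceptable X v a) ∧ (v a = some false ↔ unacceptable X v a)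

/-- `v` is preferred for the SETAF `X`: `≤ᵢ`-maximal admissible. -/
def prfS (X : Set (Set A × A)) (v : Interp A) : Prop :=
  admS X v ∧ ¬ ∃ w, admS X w ∧ ltI v w

/-- `v` is a two-valued model of the SETAF `X`. -/
def modS (X : Set (Set A × A)) (v : Interp A) : Prop :=
  admS X v ∧ twoValued v

/-- The ADF `D_S` corresponding to the SETAF `X`:
`C_a(w) = t` iff every attack `(B, a) ∈ X` has some `b ∈ B` with `w(b) = f`. -/
noncomputable def setafADF (X : Set (Set A × A)) : A → Interp2 A → Bool :=
  fun a w => if ∀ B, (B, a) ∈ X → ∃ b ∈ B, w b = false then true else false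

/-- The ADF `D_(A,R)` associated to the AF with attack relation `R`. -/
noncomputable def afADF (R : Set (A × A)) : A → Interp2 A → Bool :=
  fun a w => if ∀ b, (b, a) ∈ R → w b = false then true else false

/-- `f` is an adm-characterization of `V`. -/
def admChar (f : Interp2 A → Interp2 A) (V : Set (Interp A)) : Prop :=
  ∀ v : Interp A, v ∈ V ↔ ∀ a, v a ≠ none → ∀ w, ext2 v w → some (f w a) = v a

/-- `f` is a com-characterization of `V`. -/
def comChar (f : Interp2 A → Interp2 A) (V : Set (Interp A)) : Prop :=
  ∀ v : Interp A, v ∈ V ↔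
    ((∀ a, v a ≠ none → ∀ w, ext2 v w → some (f w a) = v a) ∧
     (∀ a, v a = none →
        (∃ w, ext2 v w ∧ f w a = true) ∧ (∃ w, ext2 v w ∧ f w a = false)))

/-- `f` is a mod-characterization of `V`. -/
def modChar (f : Interp2 A → Interp2 A) (V : Set (Interp A)) : Prop :=
  (∀ v ∈ V, twoValued v) ∧ ∀ w : Interp2 A, (toI w ∈ V ↔ f w = w)

/-- The function `f_D` of the ADF `D` with acceptance conditions `C`. -/
def charOf (C : A → Interp2 A → Bool) : Interp2 A → Interp2 A := fun w a => C a w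

/-- The ADF `D_f` built from `f : V₂ → V₂`: `C_a(w) = t` iff `f(w)(a) = t`. -/
def adfOf (f : Interp2 A → Interp2 A) : A → Interp2 A → Bool := fun a w => f w a

/-- `b` is supporting for `a` in the ADF `C`. -/
def supporting [DecidableEq A] (C : A → Interp2 A → Bool) (b a : A) : Prop :=
  ∀ w : Interp2 A, w b = false → C a w = true → C a (Function.update w b true) = true

/-- `b` is attacking for `a` in the ADF `C`. -/
def attacking [DecidableEq A] (C : A → Interp2 A → Bool) (b a : A) : Prop :=
  ∀ w : Interp2 A, w b = false → C a (Function.update w b true) = true → C a w = true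

/-- The ADF `C` is bipolar. -/
def bipolar [DecidableEq A] (C : A → Interp2 A → Bool) : Prop :=
  ∀ a b, supporting C b a ∨ attacking C b a

/-- If `f : V₂ → V₂` is a mod-characterization of `V`,
then `mod(D_f) = V`. -/
theorem modChar_realizes (A : Type*) [Fintype A]
    (f : Interp2 A → Interp2 A) (V : Set (Interp A)) (hf : modChar f V) :
    {v : Interp A | isModel (adfOf f) v} = V := by
  ext v
  constructor
  · rintro ⟨htv, hG⟩
    -- the unique two-valued extension of v
    set w0 : Interp2 A := fun a => (v a).getD true with hw0
    have hv0 : v = toI w0 := by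
      funext a
      rcases h : v a with _ | b
      · exact absurd h (htv a)
      · simp [toI, hw0, h]
    have hext : ∀ w : Interp2 A, ext2 v w ↔ w = w0 := by
      intro w
      constructor
      · intro he; funext a
        rcases he a with h | h
        · exact absurd h (htv a)
        · simp [hw0, h]
      · rintro rfl a
        right
        rcases h : v a with _ | b
        · exact absurd h (htv a)
        · simp [hw0, h]
    have hfw : f w0 = w0 := by
      funext a
      have := congrFun hG a
      simp only [Gamma, adfOf] at this
      change (@ite _ (∀ w, ext2 v w → f w a = true) (propDecidable _) (some true) (@ite _ (∀ w, ext2 v w → f w a = false) (propDecidable _) (some false) none)) = v a at this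
      by_cases hc : ∀ w, ext2 v w → f w a = true
      · have h1 : f w0 a = true := hc w0 ((hext w0).2 rfl)
        rw [if_pos hc] at this
        have hva : v a = some (w0 a) := congrFun hv0 a
        rw [hva] at this
        rw [h1, (Option.some.inj this).symm]
      · have h2 : v a = some false := by
          rw [if_neg hc] at this
          by_cases hc2 : ∀ w, ext2 v w → f w a = false
          · rw [if_pos hc2] at this; exact this.symm
          · rw [if_neg hc2] at this; exact absurd this.symm (htv a)
        have hwa : w0 a = false := by simp [hw0, h2]
        have : ¬ f w0 a = true := by
          intro h; exact hc (fun w hw => by rw [(hext w).1 hw]; exact h)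
        rw [hwa]; exact Bool.not_eq_true _ |>.mp this
    rw [hv0]
    exact (hf.2 w0).2 hfw
  · intro hv
    have htv : twoValued v := hf.1 v hv
    set w0 : Interp2 A := fun a => (v a).getD true with hw0
    have hv0 : v = toI w0 := by
      funext a
      rcases h : v a with _ | b
      · exact absurd h (htv a)
      · simp [toI, hw0, h]
    have hext : ∀ w : Interp2 A, ext2 v w ↔ w = w0 := by
      intro w
      constructor
      · intro he; funext a
        rcases he a with h | h
        · exact absurd h (htv a)
        · simp [hw0, h]
      · rintro rfl a
        right
        rcases h : v a with _ | b
        · exact absurd h (htv a)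
        · simp [hw0, h]
    have hfw : f w0 = w0 := (hf.2 w0).1 (hv0 ▸ hv)
    refine ⟨htv, ?_⟩
    funext a
    simp only [Gamma, adfOf]
    change (@ite _ (∀ w, ext2 v w → f w a = true) (propDecidable _) (some true) (@ite _ (∀ w, ext2 v w → f w a = false) (propDecidable _) (some false) none)) = v a
    have hva : v a = some (w0 a) := by rw [hv0]; rfl
    by_cases hb : w0 a = true
    · rw [if_pos]
      · rw [hva, hb]
      · intro w hw; rw [(hext w).1 hw, hfw, hb]
    · have hb' : w0 a = false := by simpa using hb
      rw [if_neg, if_pos]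
      · rw [hva, hb']
      · intro w hw; rw [(hext w).1 hw, hfw, hb']
      · intro h
        have := h w0 ((hext w0).2 rfl)
        rw [hfw, hb'] at this; exact Bool.false_ne_true this
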